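/- Let {P_{j,m}(ε,t,A)} be a nilpotent secular-coefficient family with renormalized amplitudes 𝒜_j(ε,t,A) = P_{j,0}(ε,t,A). Then: (1) the RG equation ∂_t 𝒜_j(ε,t,A) = [∂_s P_{j,0}(ε, s, 𝒜(ε,t,A))] evaluated at s = 0 holds for all 1 ≤ j ≤ n, as an identity in ℂ[t,A][[ε]]; (2) the right-hand side equals 𝒜_{j+1}(ε,t,A) plus a series divisible by ε, where 𝒜_{n+1} := 0 (so the RG dynamics is not slow in general); (3) the inversion relation P_{j,0}(ε, −t, 𝒜(ε,t,A)) = A_j holds in ℂ[t,A][[ε]]. -/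

import Mathlib

noncomputable section

open Polynomial

/-- Finite `R`-linear combinations of Fourier modes `e^{i m t}` (`m : ℤ`):
the mode-`m` coefficient of `x` is `x m : R`. -/
abbrev ModeRing (R : Type) [CommRing R] : Type := AddMonoidAlgebra R ℤ

/-- Formal power series in `ε` whose coefficients are finite Fourier sums with
coefficients in `R`. -/
abbrev EpsSeries (R : Type) [CommRing R] : Type := PowerSeries (ModeRing R)

/-- The mode `e^{i t}`, as a unit of `EpsSeries R` (inverse `e^{-i t}`). -/
def zUnit (R : Type) [CommRing R] : (EpsSeries R)ˣ where
  val := PowerSeries.C (AddMonoidAlgebra.single 1 1)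
  inv := PowerSeries.C (AddMonoidAlgebra.single (-1) 1)
  val_inv := by
    rw [← map_mul, AddMonoidAlgebra.single_mul_single]
    norm_num [AddMonoidAlgebra.one_def]
  inv_val := by
    rw [← map_mul, AddMonoidAlgebra.single_mul_single]
    norm_num [AddMonoidAlgebra.one_def]

/-- Evaluation of a Laurent polynomial in `z` (an element of `ℂ[z,z⁻¹] = AddMonoidAlgebra ℂ ℤ`)
at `z = e^{i t}`, landing in `EpsSeries R`. -/
def zEval (R : Type) [CommRing R] [Algebra ℂ R] : AddMonoidAlgebra ℂ ℤ →+* EpsSeries R :=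
  AddMonoidAlgebra.liftNCRingHom
    (PowerSeries.C.comp (AddMonoidAlgebra.singleZeroRingHom.comp (algebraMap ℂ R)))
    ((Units.coeHom _).comp (zpowersHom _ (zUnit R)))
    (fun _ _ => Commute.all _ _)

/-- Evaluation of `V ∈ ℂ[ε, z, z⁻¹, y₁, …, yₙ]` (encoded as a polynomial in the `y`-variables
with coefficients in `ℂ[z,z⁻¹][ε]`) at `z = e^{i t}`, `ε = ε` (the power series variable)
and given formal series values of the `y`-variables. -/
def VEval {n : ℕ} (R : Type) [CommRing R] [Algebra ℂ R]
    (V : MvPolynomial (Fin n) (Polynomial (AddMonoidAlgebra ℂ ℤ)))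
    (y : Fin n → EpsSeries R) : EpsSeries R :=
  MvPolynomial.eval₂ (Polynomial.eval₂RingHom (zEval R) PowerSeries.X) y V

/-- The polynomial ring `ℂ[t, A₁, …, Aₙ]`: the variable `none` is `t`, `some i` is `Aᵢ`. -/
abbrev AmpRing (n : ℕ) : Type := MvPolynomial (Option (Fin n)) ℂ

/-- The secular coefficient `P_{j,m}(ε,t,A) ∈ ℂ[t,A][[ε]]` of a family
`Q j = Σ_k ε^k Σ_m P_{j,m}^{(k)} e^{imt}`. -/
def Pc {n : ℕ} (Q : Fin n → EpsSeries (AmpRing n)) (j : Fin n) (m : ℤ) :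
    PowerSeries (AmpRing n) :=
  PowerSeries.mk fun k => (PowerSeries.coeff (R := (ModeRing (AmpRing n))) k (Q j)).coeff m

/-- The polynomial ring `ℂ[t, s, A₁, …, Aₙ]`: `none` is `t`, `some none` is `s`,
`some (some i)` is `Aᵢ`. -/
abbrev AmpRing2 (n : ℕ) : Type := MvPolynomial (Option (Option (Fin n))) ℂ

/-- The inclusion `ℂ[t,A] → ℂ[t,s,A]`. -/
def embedTA {n : ℕ} : AmpRing n →+* AmpRing2 n :=
  (MvPolynomial.rename (Option.map (some : Fin n → Option (Fin n)))).toRingHom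

/-- The map `ℂ[t,A] → ℂ[t,s,A]` renaming `t` to `s`. -/
def renameTS {n : ℕ} : AmpRing n →+* AmpRing2 n :=
  (MvPolynomial.rename
    (fun v : Option (Fin n) => Option.elim v (some none) (fun i => some (some i)))).toRingHom

/-- Substitution of power series (with nontrivial `ε⁰`-part) for the coefficient variables of a
power series: `(substSeries φ p) = Σ_k ε^k · φ(coeff_k p)`; at each `ε`-order this is a finite
sum. -/
def substSeries {R R' : Type} [CommRing R] [CommRing R'] (φ : R →+* PowerSeries R')
    (p : PowerSeries R) : PowerSeries R' :=
  PowerSeries.mk fun K => ∑ k ∈ Finset.range (K + 1),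
    PowerSeries.coeff (R := R') (K - k) (φ (PowerSeries.coeff (R := R) k p))


/-- `g(t,A) = Σ_{k=1}^{n} A_k t^{k-1}/(k-1)!` as an element of `ℂ[t,A]` (here `0`-indexed:
`g = Σ_{k : Fin n} A_k t^k / k!`). -/
def gMv (n : ℕ) : AmpRing n :=
  ∑ k : Fin n, MvPolynomial.C ((1 : ℂ) / ((k : ℕ).factorial : ℂ))
    * MvPolynomial.X (some k) * MvPolynomial.X (none : Option (Fin n)) ^ (k : ℕ)

/-- The `(j+1)`-st secular coefficient, with the convention `P_{n+1,m} := 0`. -/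
def PcNext {n : ℕ} (Q : Fin n → EpsSeries (AmpRing n)) (j : Fin n) (m : ℤ) :
    PowerSeries (AmpRing n) :=
  if h : (j : ℕ) + 1 < n then Pc Q ⟨(j : ℕ) + 1, h⟩ m else 0

/-- A nilpotent secular-coefficient family for `dy/dt = Λ y + ε V(ε,e^{±it},y)`, `Λ` the upper
Jordan nilpotent block:
(a) at each `ε`-order only finitely many modes are nonzero (built into `ModeRing`);
(b) the `ε⁰`-coefficient of `P_{j,m}` is `δ_{m,0} d^{j-1}g/dt^{j-1}`;
(c) for `k ≥ 1` the `ε^k`-coefficient of the resonant `P_{j,0}` vanishes at `t = 0`;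
(d) order by order in `ε` and mode by mode in `e^{imt}`:
`∂_t P_{j,m} + i m P_{j,m} = P_{j+1,m} + [ε V_j(ε, e^{±it}, Σ_l P_{·,l} e^{ilt})]_{e^{imt}}`. -/
structure IsNilpotentSecularFamily {n : ℕ}
    (V : Fin n → MvPolynomial (Fin n) (Polynomial (AddMonoidAlgebra ℂ ℤ)))
    (Q : Fin n → EpsSeries (AmpRing n)) : Prop where
  coeff_zero : ∀ j : Fin n, PowerSeries.coeff (R := (ModeRing (AmpRing n))) 0 (Q j)
      = AddMonoidAlgebra.single 0 ((fun p => MvPolynomial.pderiv none p)^[(j : ℕ)] (gMv n))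
  resonant_vanish : ∀ (j : Fin n) (k : ℕ), 1 ≤ k →
    MvPolynomial.aeval
      (fun v : Option (Fin n) => Option.elim v (0 : AmpRing n) (fun i => MvPolynomial.X (some i)))
      ((PowerSeries.coeff (R := (ModeRing (AmpRing n))) k (Q j)).coeff 0) = 0
  ode : ∀ (j : Fin n) (m : ℤ),
    (PowerSeries.mk fun k =>
        MvPolynomial.pderiv none ((PowerSeries.coeff (R := (ModeRing (AmpRing n))) k (Q j)).coeff m))
      + PowerSeries.C (MvPolynomial.C (Complex.I * (m : ℂ))) * Pc Q j m
      = PcNext Q j m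
        + PowerSeries.mk fun k =>
            (PowerSeries.coeff (R := (ModeRing (AmpRing n))) k
              (PowerSeries.X * VEval (AmpRing n) (V j) Q)).coeff m

/-- Coefficientwise `∂_t` on `ℂ[t,A][[ε]]`. -/
def dT {n : ℕ} (p : PowerSeries (AmpRing n)) : PowerSeries (AmpRing n) :=
  PowerSeries.mk fun k => MvPolynomial.pderiv none (PowerSeries.coeff (R := AmpRing n) k p)

/-- Coefficientwise `∂_s` on `ℂ[t,s,A][[ε]]`. -/
def dS {n : ℕ} (p : PowerSeries (AmpRing2 n)) : PowerSeries (AmpRing2 n) :=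
  PowerSeries.mk fun k => MvPolynomial.pderiv (some none) (PowerSeries.coeff (R := AmpRing2 n) k p)

/-- Evaluation `s := 0`, a ring map `ℂ[t,s,A] → ℂ[t,A]`. -/
def evalS0 {n : ℕ} : AmpRing2 n →+* AmpRing n :=
  MvPolynomial.eval₂Hom MvPolynomial.C
    (fun v : Option (Option (Fin n)) => Option.elim v (MvPolynomial.X none)
      (fun w => Option.elim w 0 (fun i => MvPolynomial.X (some i))))

/-- The substitution `t ↦ s`, `A_i ↦ 𝒜_i(ε,t,A) = P_{i,0}(ε,t,A)`, as a ring map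
`ℂ[t,A] → ℂ[t,s,A][[ε]]`. -/
def substSA0 {n : ℕ} (Q : Fin n → EpsSeries (AmpRing n)) :
    AmpRing n →+* PowerSeries (AmpRing2 n) :=
  MvPolynomial.eval₂Hom ((PowerSeries.C (R := AmpRing2 n)).comp MvPolynomial.C)
    (fun v : Option (Fin n) => Option.elim v
      (PowerSeries.C (MvPolynomial.X (some none)))
      (fun i => PowerSeries.map embedTA (Pc Q i 0)))

/-- The substitution `t ↦ -t`, `A_i ↦ 𝒜_i(ε,t,A)`, as a ring map `ℂ[t,A] → ℂ[t,A][[ε]]`. -/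
def substInv0 {n : ℕ} (Q : Fin n → EpsSeries (AmpRing n)) :
    AmpRing n →+* PowerSeries (AmpRing n) :=
  MvPolynomial.eval₂Hom ((PowerSeries.C (R := AmpRing n)).comp MvPolynomial.C)
    (fun v : Option (Fin n) => Option.elim v
      (PowerSeries.C (-MvPolynomial.X none))
      (fun i => Pc Q i 0))

namespace RGaux
open PowerSeries

variable {R R' R'' : Type} [CommRing R] [CommRing R'] [CommRing R'']

theorem coeff_substSeries (φ : R →+* PowerSeries R') (p : PowerSeries R) (K : ℕ) :
    PowerSeries.coeff (R := R') K (substSeries φ p)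
      = ∑ k ∈ Finset.range (K + 1),
          PowerSeries.coeff (R := R') (K - k) (φ (PowerSeries.coeff (R := R) k p)) := by
  simp [substSeries]

theorem substSeries_add (φ : R →+* PowerSeries R') (p q : PowerSeries R) :
    substSeries φ (p + q) = substSeries φ p + substSeries φ q := by
  ext K
  simp [coeff_substSeries, Finset.sum_add_distrib]

theorem substSeries_coe (φ : R →+* PowerSeries R') (f : Polynomial R) :
    substSeries φ (f : PowerSeries R) = Polynomial.eval₂ φ PowerSeries.X f := by
  induction f using Polynomial.induction_on' with
  | add p q hp hq => rw [Polynomial.coe_add, substSeries_add, hp, hq, Polynomial.eval₂_add]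
  | monomial i a =>
    ext K
    rw [coeff_substSeries, Polynomial.eval₂_monomial, PowerSeries.coeff_mul_X_pow']
    simp only [Polynomial.coeff_coe, Polynomial.coeff_monomial]
    rw [Finset.sum_congr rfl (fun k _ => by
      rw [apply_ite φ, map_zero, apply_ite (PowerSeries.coeff (R := R') (K - k)), map_zero])]
    rw [Finset.sum_ite_eq (Finset.range (K + 1)) i
      (fun k => PowerSeries.coeff (R := R') (K - k) (φ a))]
    simp [Finset.mem_range, Nat.lt_succ_iff]

/-- truncation equivalence -/
def TE (K : ℕ) (x y : PowerSeries R) : Prop :=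
  ∀ l ≤ K, PowerSeries.coeff (R := R) l x = PowerSeries.coeff (R := R) l y

theorem TE.refl {K : ℕ} (x : PowerSeries R) : TE K x x := fun _ _ => rfl

theorem TE.add {K : ℕ} {x x' y y' : PowerSeries R} (h1 : TE K x x') (h2 : TE K y y') :
    TE K (x + y) (x' + y') := fun l hl => by
  simp [map_add, h1 l hl, h2 l hl]

theorem TE.mul {K : ℕ} {x x' y y' : PowerSeries R} (h1 : TE K x x') (h2 : TE K y y') :
    TE K (x * y) (x' * y') := fun l hl => by
  rw [PowerSeries.coeff_mul, PowerSeries.coeff_mul]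
  refine Finset.sum_congr rfl fun ab hab => ?_
  rw [Finset.HasAntidiagonal.mem_antidiagonal] at hab
  rw [h1 ab.1 (le_trans (by omega) hl), h2 ab.2 (le_trans (by omega) hl)]

theorem TE.substSeries {K : ℕ} (φ : R →+* PowerSeries R') {x y : PowerSeries R}
    (h : TE K x y) : TE K (substSeries φ x) (substSeries φ y) := fun l hl => by
  rw [coeff_substSeries, coeff_substSeries]
  refine Finset.sum_congr rfl fun k hk => ?_
  rw [Finset.mem_range, Nat.lt_succ_iff] at hk
  rw [h k (le_trans hk hl)]

theorem TE.trunc {K : ℕ} (x : PowerSeries R) :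
    TE K x ((PowerSeries.trunc (K + 1) x : Polynomial R) : PowerSeries R) := fun l hl => by
  rw [Polynomial.coeff_coe, PowerSeries.coeff_trunc, if_pos (Nat.lt_succ_of_le hl)]

theorem substSeries_mul (φ : R →+* PowerSeries R') (p q : PowerSeries R) :
    substSeries φ (p * q) = substSeries φ p * substSeries φ q := by
  ext K
  set P := PowerSeries.trunc (K + 1) p
  set Qq := PowerSeries.trunc (K + 1) q
  have h1 : PowerSeries.coeff (R := R') K (substSeries φ (p * q))
      = PowerSeries.coeff (R := R') K (substSeries φ ((P : PowerSeries R) * (Qq : PowerSeries R))) :=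
    TE.substSeries φ (TE.mul (TE.trunc p) (TE.trunc q)) K le_rfl
  rw [h1, ← Polynomial.coe_mul, substSeries_coe, Polynomial.eval₂_mul,
    ← substSeries_coe φ P, ← substSeries_coe φ Qq]
  rw [PowerSeries.coeff_mul, PowerSeries.coeff_mul]
  refine Finset.sum_congr rfl fun ab hab => ?_
  rw [Finset.HasAntidiagonal.mem_antidiagonal] at hab
  rw [← TE.substSeries φ (TE.trunc (K := K) p) ab.1 (by omega),
    ← TE.substSeries φ (TE.trunc (K := K) q) ab.2 (by omega)]

theorem substSeries_one (φ : R →+* PowerSeries R') : substSeries φ 1 = 1 := by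
  rw [← Polynomial.coe_one, substSeries_coe, Polynomial.eval₂_one]

/-- `substSeries` as a ring hom. -/
def substHom (φ : R →+* PowerSeries R') : PowerSeries R →+* PowerSeries R' where
  toFun := substSeries φ
  map_one' := substSeries_one φ
  map_mul' := substSeries_mul φ
  map_zero' := by ext K; simp [coeff_substSeries]
  map_add' := substSeries_add φ

@[simp] theorem substHom_apply (φ : R →+* PowerSeries R') (p : PowerSeries R) :
    substHom φ p = substSeries φ p := rfl

theorem substSeries_C (φ : R →+* PowerSeries R') (r : R) :
    substSeries φ (PowerSeries.C (R := R) r) = φ r := by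
  rw [← Polynomial.coe_C, substSeries_coe, Polynomial.eval₂_C]

theorem substSeries_X (φ : R →+* PowerSeries R') :
    substSeries φ PowerSeries.X = PowerSeries.X := by
  rw [← Polynomial.coe_X, substSeries_coe, Polynomial.eval₂_X]

theorem map_substSeries (φ : R →+* PowerSeries R') (ρ : R' →+* R'') (p : PowerSeries R) :
    PowerSeries.map ρ (substSeries φ p)
      = substSeries ((PowerSeries.map ρ).comp φ) p := by
  ext K
  rw [PowerSeries.coeff_map, coeff_substSeries, coeff_substSeries, map_sum]
  exact Finset.sum_congr rfl fun k _ => by rw [RingHom.comp_apply, PowerSeries.coeff_map]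

end RGaux
namespace RGaux
open MvPolynomial

section Pderiv
variable {σ : Type} [DecidableEq σ]

theorem coeff_pderiv (v : σ) (p : MvPolynomial σ ℂ) (m : σ →₀ ℕ) :
    MvPolynomial.coeff m (MvPolynomial.pderiv v p)
      = ((m v : ℂ) + 1) * MvPolynomial.coeff (m + Finsupp.single v 1) p := by
  induction p using MvPolynomial.induction_on' with
  | add p q hp hq => simp [map_add, hp, hq, mul_add]
  | monomial u a =>
    rw [pderiv_monomial, MvPolynomial.coeff_monomial, MvPolynomial.coeff_monomial]
    by_cases h : u = m + Finsupp.single v 1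
    · have h1 : u - Finsupp.single v 1 = m := by
        rw [h, add_tsub_cancel_right]
      have h2 : u v = m v + 1 := by
        rw [h]; simp [Finsupp.add_apply, Finsupp.single_eq_same]
      rw [if_pos h1, if_pos h, h2]
      push_cast
      ring
    · rw [if_neg h]
      by_cases huv : u v = 0
      · simp [huv]
      · have : ¬ (u - Finsupp.single v 1 = m) := by
          intro he
          apply h
          rw [← he, tsub_add_cancel_of_le]
          rwa [Finsupp.single_le_iff, Nat.one_le_iff_ne_zero]
        rw [if_neg this, mul_zero]

theorem coeff_eq_zero_of_pderiv_eq_zero {v : σ} {p : MvPolynomial σ ℂ}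
    (h : MvPolynomial.pderiv v p = 0) {m : σ →₀ ℕ} (hm : m v ≠ 0) :
    MvPolynomial.coeff m p = 0 := by
  have h0 : MvPolynomial.coeff (m - Finsupp.single v 1) (MvPolynomial.pderiv v p) = 0 := by
    rw [h]; simp
  rw [coeff_pderiv] at h0
  have hle : Finsupp.single v 1 ≤ m := by
    rwa [Finsupp.single_le_iff, Nat.one_le_iff_ne_zero]
  rw [tsub_add_cancel_of_le hle] at h0
  have hne : (((m - Finsupp.single v 1 : σ →₀ ℕ) v : ℂ)) + 1 ≠ 0 := by
    have : ((((m - Finsupp.single v 1 : σ →₀ ℕ) v + 1 : ℕ)) : ℂ) ≠ 0 := Nat.cast_ne_zero.mpr (by omega)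
    push_cast at this
    exact this
  exact (mul_eq_zero.mp h0).resolve_left hne

theorem pderiv_iterate_eq_zero (v : σ) (p : MvPolynomial σ ℂ) :
    ∃ N : ℕ, (MvPolynomial.pderiv v)^[N] p = 0 := by
  suffices h : ∀ N : ℕ, ∀ p : MvPolynomial σ ℂ,
      (∀ m : σ →₀ ℕ, N ≤ m v → MvPolynomial.coeff m p = 0) →
      (MvPolynomial.pderiv v)^[N] p = 0 by
    refine ⟨MvPolynomial.degreeOf v p + 1, h _ p fun m hm => ?_⟩
    by_contra hc
    have hmem : m ∈ p.support := MvPolynomial.mem_support_iff.mpr hc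
    have := (MvPolynomial.degreeOf_lt_iff (Nat.succ_pos _)).mp
      (Nat.lt_succ_self (MvPolynomial.degreeOf v p)) m hmem
    omega
  intro N
  induction N with
  | zero =>
    intro p hp
    ext m
    simpa using hp m (Nat.zero_le _)
  | succ N ih =>
    intro p hp
    rw [Function.iterate_succ_apply]
    refine ih _ fun m hm => ?_
    rw [coeff_pderiv]
    rw [hp (m + Finsupp.single v 1) (by simp only [Finsupp.add_apply, Finsupp.single_eq_same]; omega), mul_zero]

theorem eq_zero_of_pderiv_add_C_mul {v : σ} {c : ℂ} (hc : c ≠ 0) {p : MvPolynomial σ ℂ}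
    (h : MvPolynomial.pderiv v p + MvPolynomial.C c * p = 0) : p = 0 := by
  have h' : p = MvPolynomial.C (-c⁻¹) * MvPolynomial.pderiv v p := by
    have : MvPolynomial.C c * p = - MvPolynomial.pderiv v p := by
      rw [eq_neg_iff_add_eq_zero, add_comm]; exact h
    calc p = MvPolynomial.C (c⁻¹ * c) * p := by rw [inv_mul_cancel₀ hc]; simp
    _ = MvPolynomial.C c⁻¹ * (MvPolynomial.C c * p) := by rw [map_mul, mul_assoc]
    _ = MvPolynomial.C (-c⁻¹) * MvPolynomial.pderiv v p := by
        rw [this, map_neg]; ring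
  have key : ∀ N : ℕ, p = MvPolynomial.C (-c⁻¹) ^ N * (MvPolynomial.pderiv v)^[N] p := by
    intro N
    induction N with
    | zero => simp
    | succ N ih =>
      calc p = MvPolynomial.C (-c⁻¹) * MvPolynomial.pderiv v p := h'
      _ = MvPolynomial.C (-c⁻¹) * MvPolynomial.pderiv v
            (MvPolynomial.C (-c⁻¹) ^ N * (MvPolynomial.pderiv v)^[N] p) := by rw [← ih]
      _ = MvPolynomial.C (-c⁻¹) ^ (N + 1) * (MvPolynomial.pderiv v)^[N + 1] p := by
          rw [MvPolynomial.pderiv_mul]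
          have : MvPolynomial.pderiv v (MvPolynomial.C (-c⁻¹) ^ N : MvPolynomial σ ℂ) = 0 := by
            rw [← map_pow, MvPolynomial.pderiv_C]
          rw [this, zero_mul, zero_add, Function.iterate_succ_apply']
          ring
  obtain ⟨N, hN⟩ := pderiv_iterate_eq_zero v p
  rw [key N, hN, mul_zero]

theorem aeval_eq_self_of_pderiv_eq_zero {v : σ} {g : σ → MvPolynomial σ ℂ}
    (hgv : g v = 0) (hgw : ∀ w, w ≠ v → g w = MvPolynomial.X w)
    {p : MvPolynomial σ ℂ} (h : MvPolynomial.pderiv v p = 0) :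
    MvPolynomial.aeval g p = p := by
  conv_lhs => rw [p.as_sum]
  rw [map_sum]
  conv_rhs => rw [p.as_sum]
  refine Finset.sum_congr rfl fun m hm => ?_
  have hmv : m v = 0 := by
    by_contra hmv
    exact (MvPolynomial.mem_support_iff.mp hm) (coeff_eq_zero_of_pderiv_eq_zero h hmv)
  rw [MvPolynomial.aeval_monomial, MvPolynomial.monomial_eq, MvPolynomial.algebraMap_eq]
  congr 1
  refine Finsupp.prod_congr fun w hw => ?_
  have hwv : w ≠ v := by
    intro he; subst he
    exact (Finsupp.mem_support_iff.mp hw) hmv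
  rw [hgw w hwv]

end Pderiv

section Chain
variable {σ : Type} [DecidableEq σ] {B : Type} [CommRing B] [Algebra ℂ B]

theorem chain_rule (D : B →+ B) (hmul : ∀ x y, D (x * y) = D x * y + x * D y)
    (halg : ∀ c : ℂ, D (algebraMap ℂ B c) = 0)
    (f : σ → B) (u : σ) (h1 : D (f u) = 1) (h0 : ∀ v, v ≠ u → D (f v) = 0)
    (p : MvPolynomial σ ℂ) :
    D (MvPolynomial.aeval f p) = MvPolynomial.aeval f (MvPolynomial.pderiv u p) := by
  induction p using MvPolynomial.induction_on with
  | C c => simp [MvPolynomial.aeval_C, halg, MvPolynomial.pderiv_C]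
  | add p q hp hq => simp [map_add, hp, hq]
  | mul_X p v hp =>
    rw [map_mul, MvPolynomial.aeval_X, hmul, hp, MvPolynomial.pderiv_mul, map_add, map_mul,
      map_mul, MvPolynomial.aeval_X]
    by_cases hv : v = u
    · subst hv
      rw [MvPolynomial.pderiv_X_self, h1, mul_one, map_one, mul_one]
    · rw [MvPolynomial.pderiv_X_of_ne hv, h0 v hv, mul_zero, map_zero, mul_zero]

theorem chain_rule_zero (D : B →+ B) (hmul : ∀ x y, D (x * y) = D x * y + x * D y)
    (halg : ∀ c : ℂ, D (algebraMap ℂ B c) = 0)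
    (f : σ → B) (h0 : ∀ v, D (f v) = 0)
    (p : MvPolynomial σ ℂ) :
    D (MvPolynomial.aeval f p) = 0 := by
  induction p using MvPolynomial.induction_on with
  | C c => simp [MvPolynomial.aeval_C, halg]
  | add p q hp hq => simp [map_add, hp, hq]
  | mul_X p v hp =>
    rw [map_mul, MvPolynomial.aeval_X, hmul, hp, h0 v, mul_zero, zero_mul, zero_add]

end Chain
end RGaux
namespace RGaux
open PowerSeries

variable {R R' : Type} [CommRing R] [CommRing R']

/-- mode-`m` extraction as a power series -/
def mSer (x : EpsSeries R) (m : ℤ) : PowerSeries R :=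
  PowerSeries.mk fun k => (PowerSeries.coeff (R := ModeRing R) k x).coeff m

theorem coeff_mSer (x : EpsSeries R) (m : ℤ) (k : ℕ) :
    PowerSeries.coeff (R := R) k (mSer x m) = (PowerSeries.coeff (R := ModeRing R) k x).coeff m := by
  simp [mSer]

/-- coefficientwise ring map on mode rings -/
def modeMap (f : R →+* R') : ModeRing R →+* ModeRing R' :=
  AddMonoidAlgebra.liftNCRingHom (AddMonoidAlgebra.singleZeroRingHom.comp f)
    (AddMonoidAlgebra.of R' ℤ) (fun _ _ => Commute.all _ _)

theorem modeMap_single (f : R →+* R') (m : ℤ) (r : R) :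
    modeMap f (AddMonoidAlgebra.single m r) = AddMonoidAlgebra.single m (f r) := by
  show AddMonoidAlgebra.liftNC
      (((AddMonoidAlgebra.singleZeroRingHom.comp f : R →+* ModeRing R') : R →+ ModeRing R'))
      (⇑(AddMonoidAlgebra.of R' ℤ)) (AddMonoidAlgebra.single m r)
    = AddMonoidAlgebra.single m (f r)
  rw [AddMonoidAlgebra.liftNC_single]
  show AddMonoidAlgebra.single 0 (f r) * AddMonoidAlgebra.single m 1 = _
  rw [AddMonoidAlgebra.single_mul_single, zero_add, mul_one]

theorem modeMap_apply (f : R →+* R') (x : ModeRing R) (m : ℤ) :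
    (modeMap f x).coeff m = f (x.coeff m) := by
  induction x using AddMonoidAlgebra.induction_linear with
  | zero => simp
  | add a b ha hb => rw [map_add, AddMonoidAlgebra.coeff_add, AddMonoidAlgebra.coeff_add, Finsupp.add_apply, Finsupp.add_apply, ha, hb, map_add]
  | single m' r =>
    rw [modeMap_single, AddMonoidAlgebra.coeff_single, AddMonoidAlgebra.coeff_single]
    classical
    rw [Finsupp.single_apply, Finsupp.single_apply, apply_ite f, map_zero]

theorem mSer_map (f : R →+* R') (x : EpsSeries R) (m : ℤ) :
    mSer (PowerSeries.map (modeMap f) x) m = PowerSeries.map f (mSer x m) := by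
  ext k
  rw [coeff_mSer, PowerSeries.coeff_map, PowerSeries.coeff_map, coeff_mSer, modeMap_apply]

/-- extension of a coefficient substitution to mode rings -/
def modeSubst (φ : R →+* PowerSeries R') : ModeRing R →+* EpsSeries R' :=
  AddMonoidAlgebra.liftNCRingHom
    ((PowerSeries.map AddMonoidAlgebra.singleZeroRingHom).comp φ)
    ((PowerSeries.C (R := ModeRing R')).toMonoidHom.comp (AddMonoidAlgebra.of R' ℤ))
    (fun _ _ => Commute.all _ _)

theorem modeSubst_single (φ : R →+* PowerSeries R') (m : ℤ) (r : R) :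
    modeSubst φ (AddMonoidAlgebra.single m r)
      = PowerSeries.map AddMonoidAlgebra.singleZeroRingHom (φ r)
        * PowerSeries.C (R := ModeRing R') (AddMonoidAlgebra.single m 1) := by
  show AddMonoidAlgebra.liftNC
      ((((PowerSeries.map (AddMonoidAlgebra.singleZeroRingHom : R' →+* ModeRing R')).comp φ
        : R →+* EpsSeries R')) : R →+ EpsSeries R')
      (⇑((PowerSeries.C (R := ModeRing R')).toMonoidHom.comp (AddMonoidAlgebra.of R' ℤ)))
      (AddMonoidAlgebra.single m r) = _
  rw [AddMonoidAlgebra.liftNC_single]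
  rfl

theorem modeSubst_coeff (φ : R →+* PowerSeries R') (x : ModeRing R) (l : ℕ) (m : ℤ) :
    (PowerSeries.coeff (R := ModeRing R') l (modeSubst φ x)).coeff m
      = PowerSeries.coeff (R := R') l (φ (x.coeff m)) := by
  induction x using AddMonoidAlgebra.induction_linear with
  | zero => simp
  | add a b ha hb =>
    rw [map_add, map_add]
    rw [AddMonoidAlgebra.coeff_add, AddMonoidAlgebra.coeff_add, Finsupp.add_apply, Finsupp.add_apply]
    rw [ha, hb, map_add, map_add]
  | single m' r =>
    rw [modeSubst_single, PowerSeries.coeff_mul_C, PowerSeries.coeff_map]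
    classical
    have h1 : (AddMonoidAlgebra.singleZeroRingHom (PowerSeries.coeff (R := R') l (φ r))
        : ModeRing R') = AddMonoidAlgebra.single 0 (PowerSeries.coeff (R := R') l (φ r)) := rfl
    rw [h1, AddMonoidAlgebra.single_mul_single, zero_add, mul_one]
    by_cases h : m' = m
    · subst h
      rw [AddMonoidAlgebra.coeff_single, AddMonoidAlgebra.coeff_single, Finsupp.single_eq_same, Finsupp.single_eq_same]
    · rw [AddMonoidAlgebra.coeff_single, AddMonoidAlgebra.coeff_single, Finsupp.single_eq_of_ne (Ne.symm h), Finsupp.single_eq_of_ne (Ne.symm h)]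
      rw [map_zero, map_zero]

theorem mSer_substSeries (φ : R →+* PowerSeries R') (x : EpsSeries R) (m : ℤ) :
    mSer (substSeries (modeSubst φ) x) m = substSeries φ (mSer x m) := by
  ext K
  rw [coeff_mSer, coeff_substSeries, coeff_substSeries]
  rw [AddMonoidAlgebra.coeff_sum, Finsupp.finset_sum_apply]
  exact Finset.sum_congr rfl fun k _ => by rw [modeSubst_coeff, coeff_mSer]

end RGaux
namespace RGaux
open PowerSeries

variable {R R' : Type} [CommRing R] [CommRing R'] [Algebra ℂ R] [Algebra ℂ R']

theorem zEval_single (m : ℤ) (c : ℂ) :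
    zEval R (AddMonoidAlgebra.single m c)
      = PowerSeries.C (R := ModeRing R) (AddMonoidAlgebra.single 0 (algebraMap ℂ R c))
        * ((zUnit R ^ m : (EpsSeries R)ˣ) : EpsSeries R) := by
  show AddMonoidAlgebra.liftNC
      ((((PowerSeries.C (R := ModeRing R)).comp
          (AddMonoidAlgebra.singleZeroRingHom.comp (algebraMap ℂ R)) : ℂ →+* EpsSeries R))
        : ℂ →+ EpsSeries R)
      (⇑((Units.coeHom (EpsSeries R)).comp (zpowersHom ((EpsSeries R)ˣ) (zUnit R))))
      (AddMonoidAlgebra.single m c) = _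
  rw [AddMonoidAlgebra.liftNC_single]
  rfl

theorem hom_zUnit_zpow (F : EpsSeries R →+* EpsSeries R')
    (h1 : F ((zUnit R : (EpsSeries R)ˣ) : EpsSeries R)
      = ((zUnit R' : (EpsSeries R')ˣ) : EpsSeries R')) (m : ℤ) :
    F ((zUnit R ^ m : (EpsSeries R)ˣ) : EpsSeries R)
      = ((zUnit R' ^ m : (EpsSeries R')ˣ) : EpsSeries R') := by
  have hu : Units.map (F : EpsSeries R →* EpsSeries R') (zUnit R) = zUnit R' :=
    Units.ext h1
  calc F ((zUnit R ^ m : (EpsSeries R)ˣ) : EpsSeries R)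
      = ((Units.map (F : EpsSeries R →* EpsSeries R') (zUnit R ^ m) : (EpsSeries R')ˣ)
          : EpsSeries R') := rfl
    _ = ((zUnit R' ^ m : (EpsSeries R')ˣ) : EpsSeries R') := by rw [map_zpow, hu]

theorem zEval_nat (F : EpsSeries R →+* EpsSeries R')
    (hCalg : ∀ c : ℂ, F (PowerSeries.C (R := ModeRing R) (AddMonoidAlgebra.single 0 (algebraMap ℂ R c)))
        = PowerSeries.C (R := ModeRing R') (AddMonoidAlgebra.single 0 (algebraMap ℂ R' c)))
    (hval : F ((zUnit R : (EpsSeries R)ˣ) : EpsSeries R)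
        = ((zUnit R' : (EpsSeries R')ˣ) : EpsSeries R')) :
    F.comp (zEval R) = zEval R' := by
  have eR : PowerSeries.C (R := ModeRing R)
      (AddMonoidAlgebra.single 0 (algebraMap ℂ R 1)) = 1 := by
    rw [map_one (algebraMap ℂ R), ← AddMonoidAlgebra.one_def, map_one]
  have eR' : PowerSeries.C (R := ModeRing R')
      (AddMonoidAlgebra.single 0 (algebraMap ℂ R' 1)) = 1 := by
    rw [map_one (algebraMap ℂ R'), ← AddMonoidAlgebra.one_def, map_one]
  apply AddMonoidAlgebra.ringHom_ext
  · intro b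
    rw [RingHom.comp_apply, zEval_single, zEval_single]
    simp only [zpow_zero, Units.val_one, mul_one]
    exact hCalg b
  · intro m
    rw [RingHom.comp_apply, zEval_single, zEval_single, eR, eR', one_mul, one_mul]
    exact hom_zUnit_zpow F hval m

theorem VEval_nat {n : ℕ} (F : EpsSeries R →+* EpsSeries R')
    (hcomp : F.comp (zEval R) = zEval R') (hX : F PowerSeries.X = PowerSeries.X)
    (V : MvPolynomial (Fin n) (Polynomial (AddMonoidAlgebra ℂ ℤ)))
    (y : Fin n → EpsSeries R) :
    F (VEval R V y) = VEval R' V (fun i => F (y i)) := by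
  unfold VEval
  rw [MvPolynomial.eval₂_comp_left F]
  congr 1
  apply Polynomial.ringHom_ext'
  · refine RingHom.ext fun a => ?_
    simp only [RingHom.comp_apply, Polynomial.coe_eval₂RingHom, Polynomial.eval₂_C]
    exact RingHom.congr_fun hcomp a
  · simp only [RingHom.comp_apply, Polynomial.coe_eval₂RingHom, Polynomial.eval₂_X]
    exact hX

theorem TE_VEval {n : ℕ} {K : ℕ}
    (V : MvPolynomial (Fin n) (Polynomial (AddMonoidAlgebra ℂ ℤ)))
    {y y' : Fin n → EpsSeries R} (h : ∀ i, TE K (y i) (y' i)) :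
    TE K (VEval R V y) (VEval R V y') := by
  unfold VEval
  induction V using MvPolynomial.induction_on with
  | C a => rw [MvPolynomial.eval₂_C, MvPolynomial.eval₂_C]; exact TE.refl _
  | add p q hp hq => rw [MvPolynomial.eval₂_add, MvPolynomial.eval₂_add]; exact TE.add hp hq
  | mul_X p i hp => rw [MvPolynomial.eval₂_mul, MvPolynomial.eval₂_mul,
      MvPolynomial.eval₂_X, MvPolynomial.eval₂_X]; exact TE.mul hp (h i)

end RGaux
namespace RGaux
open PowerSeries MvPolynomial

theorem psMap_map {R R' R'' : Type} [CommRing R] [CommRing R'] [CommRing R'']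
    (f : R →+* R') (g : R' →+* R'') (p : PowerSeries R) :
    PowerSeries.map g (PowerSeries.map f p) = PowerSeries.map (g.comp f) p := by
  ext K
  simp [PowerSeries.coeff_map]

variable {n : ℕ}

/-- `t ↦ t + s`, `Aᵢ ↦ Aᵢ` -/
def shiftF (n : ℕ) : Option (Fin n) → AmpRing2 n := fun v =>
  Option.elim v (MvPolynomial.X none + MvPolynomial.X (some none))
    (fun i => MvPolynomial.X (some (some i)))

def shiftTS (n : ℕ) : AmpRing n →+* AmpRing2 n := (MvPolynomial.aeval (shiftF n)).toRingHom

/-- `∂ₛ` on `AmpRing2` as an additive hom -/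
def pdHom (n : ℕ) : AmpRing2 n →+ AmpRing2 n where
  toFun := ⇑(MvPolynomial.pderiv (some none : Option (Option (Fin n))))
  map_zero' := map_zero _
  map_add' := fun a b => map_add _ a b

theorem pdHom_mul (x y : AmpRing2 n) : pdHom n (x * y) = pdHom n x * y + x * pdHom n y :=
  MvPolynomial.pderiv_mul

theorem pdHom_alg (c : ℂ) : pdHom n (algebraMap ℂ (AmpRing2 n) c) = 0 := by
  show MvPolynomial.pderiv (some none) (algebraMap ℂ (AmpRing2 n) c) = 0
  rw [MvPolynomial.algebraMap_eq]
  exact MvPolynomial.pderiv_C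

theorem shiftTS_apply (p : AmpRing n) : shiftTS n p = MvPolynomial.aeval (shiftF n) p := rfl

theorem shiftTS_C (c : ℂ) : shiftTS n (MvPolynomial.C c) = MvPolynomial.C c := by
  rw [shiftTS_apply, MvPolynomial.aeval_C, MvPolynomial.algebraMap_eq]

/-- chain rule for the shift -/
theorem pderiv_shiftTS (p : AmpRing n) :
    MvPolynomial.pderiv (some none) (shiftTS n p)
      = shiftTS n (MvPolynomial.pderiv none p) := by
  exact chain_rule (pdHom n) pdHom_mul pdHom_alg
    (shiftF n) none
    (by
      show MvPolynomial.pderiv (some none) (shiftF n none) = 1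
      simp [shiftF])
    (fun v hv => by
      show MvPolynomial.pderiv (some none) (shiftF n v) = 0
      cases v with
      | none => exact absurd rfl hv
      | some i => simp [shiftF])
    p

theorem pderiv_embedTA (x : AmpRing n) :
    MvPolynomial.pderiv (some none) (embedTA x) = 0 := by
  rw [embedTA, MvPolynomial.rename_eq_aeval]
  exact chain_rule_zero (pdHom n) pdHom_mul pdHom_alg
    (MvPolynomial.X ∘ Option.map (some : Fin n → Option (Fin n)))
    (fun v => by
      show MvPolynomial.pderiv (some none)
        ((MvPolynomial.X ∘ Option.map (some : Fin n → Option (Fin n))) v) = 0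
      cases v with
      | none => exact MvPolynomial.pderiv_X_of_ne (by simp)
      | some i => exact MvPolynomial.pderiv_X_of_ne (by simp))
    x

theorem coeff_dS (p : PowerSeries (AmpRing2 n)) (k : ℕ) :
    PowerSeries.coeff (R := AmpRing2 n) k (dS p)
      = MvPolynomial.pderiv (some none) (PowerSeries.coeff (R := AmpRing2 n) k p) := by
  simp [dS]

theorem dS_add (x y : PowerSeries (AmpRing2 n)) : dS (x + y) = dS x + dS y := by
  ext K; simp [coeff_dS, map_add]

/-- `dS` as an additive monoid hom -/
def dSHom (n : ℕ) : PowerSeries (AmpRing2 n) →+ PowerSeries (AmpRing2 n) where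
  toFun := dS
  map_zero' := by ext K; simp [coeff_dS]
  map_add' := dS_add

theorem dS_mul (x y : PowerSeries (AmpRing2 n)) : dS (x * y) = dS x * y + x * dS y := by
  refine PowerSeries.ext fun K => ?_
  have h1 : PowerSeries.coeff (R := AmpRing2 n) K (dS (x * y))
      = pdHom n (PowerSeries.coeff (R := AmpRing2 n) K (x * y)) := coeff_dS _ _
  rw [h1, PowerSeries.coeff_mul, map_sum, map_add, PowerSeries.coeff_mul,
    PowerSeries.coeff_mul, ← Finset.sum_add_distrib]
  refine Finset.sum_congr rfl fun ab _ => ?_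
  rw [pdHom_mul]
  have h2 : ∀ p : PowerSeries (AmpRing2 n), ∀ k, pdHom n (PowerSeries.coeff (R := AmpRing2 n) k p)
      = PowerSeries.coeff (R := AmpRing2 n) k (dS p) := fun p k => (coeff_dS p k).symm
  rw [h2, h2]

theorem dS_C (x : AmpRing2 n) :
    dS (PowerSeries.C (R := AmpRing2 n) x)
      = PowerSeries.C (R := AmpRing2 n) (MvPolynomial.pderiv (some none) x) := by
  ext K
  rw [coeff_dS, PowerSeries.coeff_C, PowerSeries.coeff_C]
  split <;> simp_all

/-- `substSA0` as an `aeval` -/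
def subF (Q : Fin n → EpsSeries (AmpRing n)) : Option (Fin n) → PowerSeries (AmpRing2 n) :=
  fun v => Option.elim v (PowerSeries.C (MvPolynomial.X (some none)))
    (fun i => PowerSeries.map embedTA (Pc Q i 0))

theorem substSA0_eq_aeval (Q : Fin n → EpsSeries (AmpRing n)) (p : AmpRing n) :
    substSA0 Q p = MvPolynomial.aeval (subF Q) p := by
  rw [MvPolynomial.aeval_def, substSA0]
  have h : ((PowerSeries.C (R := AmpRing2 n)).comp MvPolynomial.C : ℂ →+* PowerSeries (AmpRing2 n))
      = algebraMap ℂ (PowerSeries (AmpRing2 n)) := by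
    refine RingHom.ext fun c => ?_
    rw [RingHom.comp_apply, PowerSeries.algebraMap_apply, MvPolynomial.algebraMap_eq]
  rw [MvPolynomial.coe_eval₂Hom, h]
  rfl

theorem dS_substSA0 (Q : Fin n → EpsSeries (AmpRing n)) (p : AmpRing n) :
    dS (substSA0 Q p) = substSA0 Q (MvPolynomial.pderiv none p) := by
  rw [substSA0_eq_aeval, substSA0_eq_aeval]
  refine chain_rule (dSHom n) dS_mul
    (fun c => by
      show dS (algebraMap ℂ (PowerSeries (AmpRing2 n)) c) = 0
      rw [PowerSeries.algebraMap_apply, dS_C, MvPolynomial.algebraMap_eq,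
        MvPolynomial.pderiv_C, map_zero])
    (subF Q) none
    (by
      show dS (PowerSeries.C (MvPolynomial.X (some none))) = 1
      rw [dS_C, MvPolynomial.pderiv_X_self, map_one])
    (fun v hv => by
      cases v with
      | none => exact absurd rfl hv
      | some i =>
        show dS (PowerSeries.map embedTA (Pc Q i 0)) = 0
        ext K
        rw [coeff_dS, PowerSeries.coeff_map, pderiv_embedTA, map_zero])
    p

theorem pderiv_X_pow_none (e : ℕ) :
    MvPolynomial.pderiv (none : Option (Fin n)) (MvPolynomial.X none ^ e)
      = MvPolynomial.C ((e : ℕ) : ℂ) * MvPolynomial.X none ^ (e - 1) := by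
  rw [MvPolynomial.X_pow_eq_monomial, MvPolynomial.pderiv_monomial_single,
    MvPolynomial.X_pow_eq_monomial, MvPolynomial.C_mul_monomial, one_mul, mul_one]

/-- iterated `t`-derivative of `g` -/
theorem iterate_pderiv_gMv (j : ℕ) :
    (fun p => MvPolynomial.pderiv (none : Option (Fin n)) p)^[j] (gMv n)
      = ∑ k ∈ Finset.univ.filter fun k : Fin n => j ≤ (k : ℕ),
          MvPolynomial.C ((1 : ℂ) / ((k : ℕ) - j).factorial)
            * MvPolynomial.X (some k) * MvPolynomial.X none ^ ((k : ℕ) - j) := by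
  induction j with
  | zero =>
    rw [Function.iterate_zero_apply, gMv,
      Finset.filter_true_of_mem (fun _ _ => Nat.zero_le _)]
    simp
  | succ j ih =>
    rw [Function.iterate_succ_apply', ih, map_sum, Finset.sum_filter, Finset.sum_filter]
    refine Finset.sum_congr rfl fun k _ => ?_
    by_cases h1 : j + 1 ≤ (k : ℕ)
    · obtain ⟨d, hd⟩ : ∃ d, (k : ℕ) - j = d + 1 := ⟨(k : ℕ) - j - 1, by omega⟩
      have hd2 : (k : ℕ) - (j + 1) = d := by omega
      have hfd : ((d.factorial : ℂ)) ≠ 0 := Nat.cast_ne_zero.mpr d.factorial_ne_zero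
      have hc : (1 : ℂ) / ((d + 1).factorial) * ((d + 1 : ℕ) : ℂ) = 1 / (d.factorial) := by
        rw [Nat.factorial_succ]
        have hd1 : ((d : ℂ) + 1) ≠ 0 := Nat.cast_add_one_ne_zero d
        push_cast
        field_simp
      rw [if_pos h1, if_pos (by omega), MvPolynomial.pderiv_mul, MvPolynomial.pderiv_mul,
        MvPolynomial.pderiv_C, MvPolynomial.pderiv_X_of_ne (by simp), pderiv_X_pow_none,
        hd, hd2, Nat.add_sub_cancel, ← hc, map_mul]
      ring
    · rw [if_neg h1]
      by_cases h0 : j ≤ (k : ℕ)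
      · rw [if_pos h0]
        have he : (k : ℕ) - j = 0 := by omega
        rw [he, pow_zero, mul_one, MvPolynomial.pderiv_mul, MvPolynomial.pderiv_C]
        simp
      · rw [if_neg h0]
    
/-- evaluation of the iterated derivative at `t = 0` -/
theorem ev0_iterate (j : Fin n) :
    MvPolynomial.aeval
      (fun v : Option (Fin n) => Option.elim v (0 : AmpRing n) (fun i => MvPolynomial.X (some i)))
      ((fun p => MvPolynomial.pderiv (none : Option (Fin n)) p)^[(j : ℕ)] (gMv n))
      = MvPolynomial.X (some j) := by
  rw [iterate_pderiv_gMv, map_sum, Finset.sum_filter]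
  refine Eq.trans (Finset.sum_eq_single j (fun k _ hk => ?_)
    (fun h => absurd (Finset.mem_univ j) h)) ?_
  · by_cases h0 : (j : ℕ) ≤ (k : ℕ)
    · rw [if_pos h0]
      have he : (k : ℕ) - (j : ℕ) ≠ 0 := by
        have : (j : ℕ) ≠ (k : ℕ) := fun h => hk (Fin.ext h.symm)
        omega
      rw [map_mul, map_mul, map_pow, MvPolynomial.aeval_X, MvPolynomial.aeval_X]
      have h00 : ((none : Option (Fin n)).elim (0 : AmpRing n)
          (fun i => MvPolynomial.X (some i))) = 0 := rfl
      rw [h00, zero_pow he, mul_zero]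
    · rw [if_neg h0]
  · rw [if_pos le_rfl, Nat.sub_self, pow_zero, mul_one, Nat.factorial_zero, Nat.cast_one,
      div_one, map_one, one_mul, MvPolynomial.aeval_X]
    rfl

end RGaux
namespace RGaux
open PowerSeries

variable {n : ℕ}

theorem Pc_eq (Q : Fin n → EpsSeries (AmpRing n)) (j : Fin n) (m : ℤ) :
    Pc Q j m = mSer (Q j) m := rfl

/-- the shifted family `P(ε, t+s, A)` -/
def Q1 (Q : Fin n → EpsSeries (AmpRing n)) : Fin n → EpsSeries (AmpRing2 n) :=
  fun j => PowerSeries.map (modeMap (shiftTS n)) (Q j)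

/-- the substituted family `P(ε, s, 𝒜(ε,t,A))` -/
def Q2 (Q : Fin n → EpsSeries (AmpRing n)) : Fin n → EpsSeries (AmpRing2 n) :=
  fun j => substSeries (modeSubst (substSA0 Q)) (Q j)

theorem Q1_apply (Q : Fin n → EpsSeries (AmpRing n)) (j : Fin n) :
    Q1 Q j = PowerSeries.map (modeMap (shiftTS n)) (Q j) := rfl

theorem Q2_apply (Q : Fin n → EpsSeries (AmpRing n)) (j : Fin n) :
    Q2 Q j = substSeries (modeSubst (substSA0 Q)) (Q j) := rfl

theorem coeff_Pc (Q : Fin n → EpsSeries (AmpRing n)) (j : Fin n) (m : ℤ) (k : ℕ) :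
    PowerSeries.coeff (R := AmpRing n) k (Pc Q j m)
      = (PowerSeries.coeff (R := (ModeRing (AmpRing n))) k (Q j)).coeff m := by
  simp [Pc]

theorem coeff_dT (p : PowerSeries (AmpRing n)) (k : ℕ) :
    PowerSeries.coeff (R := AmpRing n) k (dT p)
      = MvPolynomial.pderiv none (PowerSeries.coeff (R := AmpRing n) k p) := by
  simp [dT]

theorem substSeries_dT (Q : Fin n → EpsSeries (AmpRing n)) (p : PowerSeries (AmpRing n)) :
    substSeries (substSA0 Q) (dT p) = dS (substSeries (substSA0 Q) p) := by
  refine PowerSeries.ext fun K => ?_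
  rw [coeff_substSeries, coeff_dS, coeff_substSeries, map_sum]
  refine Finset.sum_congr rfl fun k _ => ?_
  rw [coeff_dT, ← dS_substSA0, coeff_dS]

theorem substSA0_C (Q : Fin n → EpsSeries (AmpRing n)) (c : ℂ) :
    substSA0 Q (MvPolynomial.C c)
      = PowerSeries.C (R := AmpRing2 n) (MvPolynomial.C c) := by
  rw [substSA0, MvPolynomial.eval₂Hom_C, RingHom.comp_apply]

theorem substSA0_X (Q : Fin n → EpsSeries (AmpRing n)) (v : Option (Fin n)) :
    substSA0 Q (MvPolynomial.X v)
      = Option.elim v (PowerSeries.C (MvPolynomial.X (some none)))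
          (fun i => PowerSeries.map embedTA (Pc Q i 0)) := by
  rw [substSA0, MvPolynomial.eval₂Hom_X']

theorem zEval_nat_Q1 :
    (PowerSeries.map (modeMap (shiftTS n))).comp (zEval (AmpRing n)) = zEval (AmpRing2 n) := by
  refine zEval_nat _ (fun c => ?_) ?_
  · have h : shiftTS n (algebraMap ℂ (AmpRing n) c) = algebraMap ℂ (AmpRing2 n) c := by
      rw [MvPolynomial.algebraMap_eq, MvPolynomial.algebraMap_eq, shiftTS_C]
    rw [PowerSeries.map_C, modeMap_single, h]
  · show PowerSeries.map (modeMap (shiftTS n))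
        (PowerSeries.C (AddMonoidAlgebra.single 1 1)) = _
    rw [PowerSeries.map_C, modeMap_single, map_one]
    rfl

theorem zEval_nat_Q2 (Q : Fin n → EpsSeries (AmpRing n)) :
    (substHom (modeSubst (substSA0 Q))).comp (zEval (AmpRing n)) = zEval (AmpRing2 n) := by
  refine zEval_nat _ (fun c => ?_) ?_
  · rw [substHom_apply, substSeries_C, modeSubst_single]
    rw [MvPolynomial.algebraMap_eq, substSA0_C, PowerSeries.map_C]
    have h1 : (AddMonoidAlgebra.singleZeroRingHom (MvPolynomial.C c) : ModeRing (AmpRing2 n))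
        = AddMonoidAlgebra.single 0 (MvPolynomial.C c) := rfl
    rw [h1, ← map_mul, AddMonoidAlgebra.single_mul_single, zero_add, mul_one,
      MvPolynomial.algebraMap_eq]
  · show substHom (modeSubst (substSA0 Q))
        (PowerSeries.C (AddMonoidAlgebra.single 1 1)) = _
    rw [substHom_apply, substSeries_C, modeSubst_single, map_one, map_one, one_mul]
    rfl

theorem ode_Q1 {V : Fin n → MvPolynomial (Fin n) (Polynomial (AddMonoidAlgebra ℂ ℤ))}
    {Q : Fin n → EpsSeries (AmpRing n)}
    (hQ : IsNilpotentSecularFamily V Q) (j : Fin n) (m : ℤ) :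
    (PowerSeries.mk fun k => MvPolynomial.pderiv (some none)
        ((PowerSeries.coeff (R := (ModeRing (AmpRing2 n))) k (Q1 Q j)).coeff m))
      + PowerSeries.C (MvPolynomial.C (Complex.I * (m : ℂ))) * mSer (Q1 Q j) m
      = (if h : (j : ℕ) + 1 < n then mSer (Q1 Q ⟨(j : ℕ) + 1, h⟩) m else 0)
        + PowerSeries.mk fun k => (PowerSeries.coeff (R := (ModeRing (AmpRing2 n))) k
            (PowerSeries.X * VEval (AmpRing2 n) (V j) (Q1 Q))).coeff m := by
  have H := congrArg (PowerSeries.map (shiftTS n)) (hQ.ode j m)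
  rw [map_add, map_add, map_mul] at H
  have ha : PowerSeries.map (shiftTS n) (PowerSeries.mk fun k =>
        MvPolynomial.pderiv none ((PowerSeries.coeff (R := (ModeRing (AmpRing n))) k (Q j)).coeff m))
      = PowerSeries.mk fun k => MvPolynomial.pderiv (some none)
          ((PowerSeries.coeff (R := (ModeRing (AmpRing2 n))) k (Q1 Q j)).coeff m) := by
    refine PowerSeries.ext fun K => ?_
    rw [PowerSeries.coeff_map, PowerSeries.coeff_mk, PowerSeries.coeff_mk]
    show shiftTS n (MvPolynomial.pderiv none ((PowerSeries.coeff K (Q j)).coeff m)) = _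
    rw [Q1_apply, PowerSeries.coeff_map, modeMap_apply, pderiv_shiftTS]
  have hb : PowerSeries.map (shiftTS n)
        (PowerSeries.C (MvPolynomial.C (Complex.I * (m : ℂ))))
      = PowerSeries.C (MvPolynomial.C (Complex.I * (m : ℂ))) := by
    rw [PowerSeries.map_C, shiftTS_C]
  have hc : PowerSeries.map (shiftTS n) (Pc Q j m) = mSer (Q1 Q j) m := by
    rw [Pc_eq, Q1_apply, mSer_map]
  have he : PowerSeries.map (shiftTS n) (PowerSeries.mk fun k =>
        (PowerSeries.coeff (R := (ModeRing (AmpRing n))) k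
          (PowerSeries.X * VEval (AmpRing n) (V j) Q)).coeff m)
      = PowerSeries.mk fun k => (PowerSeries.coeff (R := (ModeRing (AmpRing2 n))) k
          (PowerSeries.X * VEval (AmpRing2 n) (V j) (Q1 Q))).coeff m := by
    have hW : PowerSeries.map (modeMap (shiftTS n))
        (PowerSeries.X * VEval (AmpRing n) (V j) Q)
        = PowerSeries.X * VEval (AmpRing2 n) (V j) (Q1 Q) := by
      rw [map_mul, PowerSeries.map_X,
        VEval_nat (PowerSeries.map (modeMap (shiftTS n))) zEval_nat_Q1 (PowerSeries.map_X _)]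
      rfl
    refine PowerSeries.ext fun K => ?_
    rw [PowerSeries.coeff_map, PowerSeries.coeff_mk, PowerSeries.coeff_mk, ← hW,
      PowerSeries.coeff_map, modeMap_apply]
  rw [ha, hb, hc, he] at H
  rw [H]
  refine congrArg (· + _) ?_
  by_cases h : (j : ℕ) + 1 < n
  · rw [dif_pos h]
    rw [PcNext, dif_pos h, Pc_eq, Q1_apply, mSer_map]
  · rw [dif_neg h, PcNext, dif_neg h, map_zero]

set_option maxHeartbeats 1000000 in
theorem ode_Q2 {V : Fin n → MvPolynomial (Fin n) (Polynomial (AddMonoidAlgebra ℂ ℤ))}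
    {Q : Fin n → EpsSeries (AmpRing n)}
    (hQ : IsNilpotentSecularFamily V Q) (j : Fin n) (m : ℤ) :
    (PowerSeries.mk fun k => MvPolynomial.pderiv (some none)
        ((PowerSeries.coeff (R := (ModeRing (AmpRing2 n))) k (Q2 Q j)).coeff m))
      + PowerSeries.C (MvPolynomial.C (Complex.I * (m : ℂ))) * mSer (Q2 Q j) m
      = (if h : (j : ℕ) + 1 < n then mSer (Q2 Q ⟨(j : ℕ) + 1, h⟩) m else 0)
        + PowerSeries.mk fun k => (PowerSeries.coeff (R := (ModeRing (AmpRing2 n))) k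
            (PowerSeries.X * VEval (AmpRing2 n) (V j) (Q2 Q))).coeff m := by
  have H := congrArg (substHom (substSA0 Q)) (hQ.ode j m)
  rw [map_add, map_add, map_mul] at H
  have hdT : (PowerSeries.mk fun k =>
        MvPolynomial.pderiv none ((PowerSeries.coeff (R := (ModeRing (AmpRing n))) k (Q j)).coeff m))
      = dT (Pc Q j m) := by
    refine PowerSeries.ext fun K => ?_
    rw [PowerSeries.coeff_mk, coeff_dT, coeff_Pc]
  have ha : substHom (substSA0 Q) (PowerSeries.mk fun k =>
        MvPolynomial.pderiv none ((PowerSeries.coeff (R := (ModeRing (AmpRing n))) k (Q j)).coeff m))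
      = PowerSeries.mk fun k => MvPolynomial.pderiv (some none)
          ((PowerSeries.coeff (R := (ModeRing (AmpRing2 n))) k (Q2 Q j)).coeff m) := by
    rw [hdT, substHom_apply, substSeries_dT, Pc_eq, ← mSer_substSeries, ← Q2_apply]
    refine PowerSeries.ext fun K => ?_
    rw [coeff_dS, coeff_mSer, PowerSeries.coeff_mk]
  have hb : substHom (substSA0 Q) (PowerSeries.C (MvPolynomial.C (Complex.I * (m : ℂ))))
      = PowerSeries.C (MvPolynomial.C (Complex.I * (m : ℂ))) := by
    rw [substHom_apply, substSeries_C, substSA0_C]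
  have hc : substHom (substSA0 Q) (Pc Q j m) = mSer (Q2 Q j) m := by
    rw [substHom_apply, Pc_eq, Q2_apply, ← mSer_substSeries]
  have he : substHom (substSA0 Q) (PowerSeries.mk fun k =>
        (PowerSeries.coeff (R := (ModeRing (AmpRing n))) k
          (PowerSeries.X * VEval (AmpRing n) (V j) Q)).coeff m)
      = PowerSeries.mk fun k => (PowerSeries.coeff (R := (ModeRing (AmpRing2 n))) k
          (PowerSeries.X * VEval (AmpRing2 n) (V j) (Q2 Q))).coeff m := by
    have hW : substHom (modeSubst (substSA0 Q)) (PowerSeries.X * VEval (AmpRing n) (V j) Q)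
        = PowerSeries.X * VEval (AmpRing2 n) (V j) (Q2 Q) := by
      rw [map_mul]
      rw [VEval_nat (substHom (modeSubst (substSA0 Q))) (zEval_nat_Q2 Q)
        (by rw [substHom_apply, substSeries_X])]
      rw [substHom_apply, substSeries_X]
      rfl
    have hmk : ∀ (W : EpsSeries (AmpRing n)),
        (PowerSeries.mk fun k => (PowerSeries.coeff (R := (ModeRing (AmpRing n))) k W).coeff m)
          = mSer W m := fun W => rfl
    rw [hmk, substHom_apply, ← mSer_substSeries, ← substHom_apply (modeSubst (substSA0 Q)) _, hW]
    rfl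
  rw [ha, hb, hc, he] at H
  rw [H]
  refine congrArg (· + _) ?_
  by_cases h : (j : ℕ) + 1 < n
  · rw [dif_pos h, PcNext, dif_pos h, substHom_apply, Pc_eq, Q2_apply, ← mSer_substSeries]
  · rw [dif_neg h, PcNext, dif_neg h, map_zero]

end RGaux
namespace RGaux
open PowerSeries

variable {n : ℕ}

theorem evalS0_C (c : ℂ) : (evalS0 (n := n)) (MvPolynomial.C c) = MvPolynomial.C c := by
  rw [evalS0, MvPolynomial.eval₂Hom_C]

theorem evalS0_X (v : Option (Option (Fin n))) :
    (evalS0 (n := n)) (MvPolynomial.X v)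
      = Option.elim v (MvPolynomial.X none)
          (fun w => Option.elim w 0 (fun i => MvPolynomial.X (some i))) := by
  rw [evalS0, MvPolynomial.eval₂Hom_X']

theorem evalS0_shiftTS : (evalS0 (n := n)).comp (shiftTS n) = RingHom.id (AmpRing n) := by
  refine MvPolynomial.ringHom_ext (fun c => ?_) (fun v => ?_)
  · rw [RingHom.comp_apply, shiftTS_C, evalS0_C, RingHom.id_apply]
  · rw [RingHom.comp_apply, RingHom.id_apply, shiftTS_apply, MvPolynomial.aeval_X]
    cases v with
    | none =>
      show (evalS0 (n := n)) (MvPolynomial.X none + MvPolynomial.X (some none)) = _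
      rw [map_add, evalS0_X, evalS0_X]
      show MvPolynomial.X none + 0 = MvPolynomial.X none
      rw [add_zero]
    | some i =>
      show (evalS0 (n := n)) (MvPolynomial.X (some (some i))) = _
      rw [evalS0_X]
      rfl

theorem embedTA_C (c : ℂ) : (embedTA (n := n)) (MvPolynomial.C c) = MvPolynomial.C c := by
  rw [embedTA]
  exact MvPolynomial.rename_C _ c

theorem embedTA_X (v : Option (Fin n)) :
    (embedTA (n := n)) (MvPolynomial.X v) = MvPolynomial.X (Option.map some v) := by
  rw [embedTA]
  exact MvPolynomial.rename_X _ v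

theorem evalS0_embedTA : (evalS0 (n := n)).comp embedTA = RingHom.id (AmpRing n) := by
  refine MvPolynomial.ringHom_ext (fun c => ?_) (fun v => ?_)
  · rw [RingHom.comp_apply, embedTA_C, evalS0_C, RingHom.id_apply]
  · rw [RingHom.comp_apply, RingHom.id_apply, embedTA_X, evalS0_X]
    cases v <;> rfl

/-- `t ↦ 0` keeping amplitudes, as ring hom -/
def ev0R (n : ℕ) : AmpRing n →+* AmpRing n :=
  (MvPolynomial.aeval
    (fun v : Option (Fin n) => Option.elim v (0 : AmpRing n)
      (fun i => MvPolynomial.X (some i)))).toRingHom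

/-- the substitution `A ↦ 𝒜(ε,t,A)` alone -/
def Phi (Q : Fin n → EpsSeries (AmpRing n)) : AmpRing n →+* PowerSeries (AmpRing n) :=
  MvPolynomial.eval₂Hom ((PowerSeries.C (R := AmpRing n)).comp MvPolynomial.C)
    (fun v : Option (Fin n) => Option.elim v 0 (fun i => Pc Q i 0))

theorem hfact (Q : Fin n → EpsSeries (AmpRing n)) :
    (PowerSeries.map (evalS0 (n := n))).comp (substSA0 Q) = (Phi Q).comp (ev0R n) := by
  refine MvPolynomial.ringHom_ext (fun c => ?_) (fun v => ?_)
  · rw [RingHom.comp_apply, RingHom.comp_apply, substSA0_C, PowerSeries.map_C, evalS0_C]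
    have h1 : ev0R n (MvPolynomial.C c) = MvPolynomial.C c := by
      show MvPolynomial.aeval _ (MvPolynomial.C c) = _
      rw [MvPolynomial.aeval_C, MvPolynomial.algebraMap_eq]
    rw [h1, Phi, MvPolynomial.eval₂Hom_C, RingHom.comp_apply]
  · rw [RingHom.comp_apply, RingHom.comp_apply, substSA0_X]
    cases v with
    | none =>
      show PowerSeries.map (evalS0 (n := n)) (PowerSeries.C (MvPolynomial.X (some none)))
        = Phi Q (ev0R n (MvPolynomial.X none))
      have h1 : ev0R n (MvPolynomial.X (none : Option (Fin n))) = 0 := by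
        show MvPolynomial.aeval _ (MvPolynomial.X none) = _
        rw [MvPolynomial.aeval_X]
        rfl
      rw [h1, map_zero, PowerSeries.map_C, evalS0_X]
      show PowerSeries.C (0 : AmpRing n) = 0
      rw [map_zero]
    | some i =>
      show PowerSeries.map (evalS0 (n := n)) (PowerSeries.map embedTA (Pc Q i 0))
        = Phi Q (ev0R n (MvPolynomial.X (some i)))
      have h1 : ev0R n (MvPolynomial.X (some i)) = MvPolynomial.X (some i) := by
        show MvPolynomial.aeval _ (MvPolynomial.X (some i)) = _
        rw [MvPolynomial.aeval_X]
        rfl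
      rw [h1, psMap_map, evalS0_embedTA, PowerSeries.map_id, Phi, MvPolynomial.eval₂Hom_X']
      rfl

theorem ev0R_coeff_hi {V : Fin n → MvPolynomial (Fin n) (Polynomial (AddMonoidAlgebra ℂ ℤ))}
    {Q : Fin n → EpsSeries (AmpRing n)} (hQ : IsNilpotentSecularFamily V Q)
    (j : Fin n) (k : ℕ) (hk : 1 ≤ k) :
    ev0R n ((PowerSeries.coeff (R := (ModeRing (AmpRing n))) k (Q j)).coeff 0) = 0 :=
  hQ.resonant_vanish j k hk

theorem ev0R_coeff_zero {V : Fin n → MvPolynomial (Fin n) (Polynomial (AddMonoidAlgebra ℂ ℤ))}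
    {Q : Fin n → EpsSeries (AmpRing n)} (hQ : IsNilpotentSecularFamily V Q) (j : Fin n) :
    ev0R n ((PowerSeries.coeff (R := (ModeRing (AmpRing n))) 0 (Q j)).coeff 0)
      = MvPolynomial.X (some j) := by
  rw [hQ.coeff_zero j]
  have h1 : (AddMonoidAlgebra.single (0 : ℤ)
      ((fun p => MvPolynomial.pderiv none p)^[(j : ℕ)] (gMv n)) : ModeRing (AmpRing n)).coeff 0
      = (fun p => MvPolynomial.pderiv none p)^[(j : ℕ)] (gMv n) := by
    rw [AddMonoidAlgebra.coeff_single, Finsupp.single_eq_same]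
  rw [h1]
  exact ev0_iterate j

theorem subst0_fix {V : Fin n → MvPolynomial (Fin n) (Polynomial (AddMonoidAlgebra ℂ ℤ))}
    {Q : Fin n → EpsSeries (AmpRing n)} (hQ : IsNilpotentSecularFamily V Q) (j : Fin n) :
    substSeries ((PowerSeries.map (evalS0 (n := n))).comp (substSA0 Q)) (Pc Q j 0)
      = Pc Q j 0 := by
  refine PowerSeries.ext fun K => ?_
  rw [coeff_substSeries]
  rw [Finset.sum_eq_single_of_mem 0 (Finset.mem_range.mpr (Nat.succ_pos K))
    (fun k _ hk => ?_)]
  · rw [Nat.sub_zero, RingHom.congr_fun (hfact Q) _, RingHom.comp_apply, coeff_Pc,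
      ev0R_coeff_zero hQ j, Phi, MvPolynomial.eval₂Hom_X']
    rfl
  · rw [RingHom.congr_fun (hfact Q) _, RingHom.comp_apply, coeff_Pc,
      ev0R_coeff_hi hQ j k (Nat.one_le_iff_ne_zero.mpr hk), map_zero, map_zero]

theorem init1 (Q : Fin n → EpsSeries (AmpRing n)) (j : Fin n) :
    PowerSeries.map (evalS0 (n := n)) (mSer (Q1 Q j) 0) = Pc Q j 0 := by
  rw [Q1_apply, mSer_map, ← Pc_eq, psMap_map, evalS0_shiftTS, PowerSeries.map_id]
  rfl

theorem init2 {V : Fin n → MvPolynomial (Fin n) (Polynomial (AddMonoidAlgebra ℂ ℤ))}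
    {Q : Fin n → EpsSeries (AmpRing n)} (hQ : IsNilpotentSecularFamily V Q) (j : Fin n) :
    PowerSeries.map (evalS0 (n := n)) (mSer (Q2 Q j) 0) = Pc Q j 0 := by
  rw [Q2_apply, mSer_substSeries, ← Pc_eq, map_substSeries]
  exact subst0_fix hQ j

/-- `aeval` fixing all variables except sending `s ↦ 0` -/
theorem embedTA_evalS0 (x : AmpRing2 n) :
    embedTA (evalS0 x)
      = MvPolynomial.aeval (fun w : Option (Option (Fin n)) =>
          if w = some none then (0 : AmpRing2 n) else MvPolynomial.X w) x := by
  have h : (embedTA (n := n)).comp evalS0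
      = (MvPolynomial.aeval (fun w : Option (Option (Fin n)) =>
          if w = some none then (0 : AmpRing2 n) else MvPolynomial.X w)).toRingHom := by
    refine MvPolynomial.ringHom_ext (fun c => ?_) (fun v => ?_)
    · rw [RingHom.comp_apply, evalS0_C, embedTA_C]
      show _ = MvPolynomial.aeval _ (MvPolynomial.C c)
      rw [MvPolynomial.aeval_C, MvPolynomial.algebraMap_eq]
    · rw [RingHom.comp_apply, evalS0_X]
      show _ = MvPolynomial.aeval _ (MvPolynomial.X v)
      rw [MvPolynomial.aeval_X]
      cases v with
      | none =>
        show embedTA (MvPolynomial.X none) = _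
        rw [embedTA_X, if_neg (by simp)]
        rfl
      | some w =>
        cases w with
        | none =>
          show embedTA (0 : AmpRing n) = _
          rw [map_zero, if_pos rfl]
        | some i =>
          show embedTA (MvPolynomial.X (some i)) = _
          rw [embedTA_X, if_neg (by simp)]
          rfl
  exact RingHom.congr_fun h x

end RGaux
namespace RGaux
open PowerSeries

variable {n : ℕ}

theorem ode_coeff_form (F : Fin n → EpsSeries (AmpRing2 n)) (j : Fin n) (m : ℤ)
    (W : EpsSeries (AmpRing2 n))
    (hode : (PowerSeries.mk fun k => MvPolynomial.pderiv (some none)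
          ((PowerSeries.coeff (R := (ModeRing (AmpRing2 n))) k (F j)).coeff m))
        + PowerSeries.C (MvPolynomial.C (Complex.I * (m : ℂ))) * mSer (F j) m
        = (if h : (j : ℕ) + 1 < n then mSer (F ⟨(j : ℕ) + 1, h⟩) m else 0)
          + PowerSeries.mk fun k => (PowerSeries.coeff (R := (ModeRing (AmpRing2 n))) k W).coeff m)
    (K : ℕ) :
    MvPolynomial.pderiv (some none)
        ((PowerSeries.coeff (R := (ModeRing (AmpRing2 n))) K (F j)).coeff m)
      + MvPolynomial.C (Complex.I * (m : ℂ))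
        * ((PowerSeries.coeff (R := (ModeRing (AmpRing2 n))) K (F j)).coeff m)
      = (if h : (j : ℕ) + 1 < n
          then ((PowerSeries.coeff (R := (ModeRing (AmpRing2 n))) K (F ⟨(j : ℕ) + 1, h⟩)).coeff m) else 0)
        + ((PowerSeries.coeff (R := (ModeRing (AmpRing2 n))) K W).coeff m) := by
  by_cases hlt : (j : ℕ) + 1 < n
  · rw [dif_pos hlt] at hode ⊢
    have h := congrArg (PowerSeries.coeff (R := AmpRing2 n) K) hode
    simp only [map_add, PowerSeries.coeff_C_mul, coeff_mSer, PowerSeries.coeff_mk] at h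
    exact h
  · rw [dif_neg hlt] at hode ⊢
    have h := congrArg (PowerSeries.coeff (R := AmpRing2 n) K) hode
    simp only [map_add, PowerSeries.coeff_C_mul, coeff_mSer, PowerSeries.coeff_mk,
      map_zero] at h
    exact h

theorem step {V : Fin n → MvPolynomial (Fin n) (Polynomial (AddMonoidAlgebra ℂ ℤ))}
    {Q : Fin n → EpsSeries (AmpRing n)} (hQ : IsNilpotentSecularFamily V Q)
    (K : ℕ) (j : Fin n) (m : ℤ)
    (hVj : PowerSeries.coeff (R := (ModeRing (AmpRing2 n))) K
        (PowerSeries.X * VEval (AmpRing2 n) (V j) (Q1 Q))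
      = PowerSeries.coeff (R := (ModeRing (AmpRing2 n))) K
        (PowerSeries.X * VEval (AmpRing2 n) (V j) (Q2 Q)))
    (hnext : (if h : (j : ℕ) + 1 < n
        then ((PowerSeries.coeff (R := (ModeRing (AmpRing2 n))) K (Q1 Q ⟨(j : ℕ) + 1, h⟩)).coeff m) else 0)
      = (if h : (j : ℕ) + 1 < n
        then ((PowerSeries.coeff (R := (ModeRing (AmpRing2 n))) K (Q2 Q ⟨(j : ℕ) + 1, h⟩)).coeff m) else 0)) :
    (PowerSeries.coeff (R := (ModeRing (AmpRing2 n))) K (Q1 Q j)).coeff m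
      = (PowerSeries.coeff (R := (ModeRing (AmpRing2 n))) K (Q2 Q j)).coeff m := by
  have e1 := ode_coeff_form (Q1 Q) j m _ (ode_Q1 hQ j m) K
  have e2 := ode_coeff_form (Q2 Q) j m _ (ode_Q2 hQ j m) K
  set a1 := (PowerSeries.coeff (R := (ModeRing (AmpRing2 n))) K (Q1 Q j)).coeff m with ha1
  set a2 := (PowerSeries.coeff (R := (ModeRing (AmpRing2 n))) K (Q2 Q j)).coeff m with ha2
  have hc12 : (PowerSeries.coeff (R := (ModeRing (AmpRing2 n))) K
        (PowerSeries.X * VEval (AmpRing2 n) (V j) (Q1 Q))).coeff m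
      = (PowerSeries.coeff (R := (ModeRing (AmpRing2 n))) K
        (PowerSeries.X * VEval (AmpRing2 n) (V j) (Q2 Q))).coeff m := by rw [hVj]
  have hL : MvPolynomial.pderiv (some none) a1
        + MvPolynomial.C (Complex.I * (m : ℂ)) * a1
      = MvPolynomial.pderiv (some none) a2
        + MvPolynomial.C (Complex.I * (m : ℂ)) * a2 := by
    rw [e1, e2, hnext, hc12]
  have hD : MvPolynomial.pderiv (some none) (a1 - a2)
      + MvPolynomial.C (Complex.I * (m : ℂ)) * (a1 - a2) = 0 := by
    rw [map_sub]
    linear_combination hL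
  by_cases hm : m = 0
  · subst hm
    have hz : (Complex.I * ((0 : ℤ) : ℂ)) = 0 := by simp
    rw [hz, map_zero, zero_mul, add_zero] at hD
    have hfix := aeval_eq_self_of_pderiv_eq_zero
      (v := (some none : Option (Option (Fin n))))
      (g := fun w => if w = some none then 0 else MvPolynomial.X w)
      (if_pos rfl) (fun w hw => if_neg hw) hD
    have hemb : a1 - a2 = embedTA (evalS0 (a1 - a2)) := by
      rw [embedTA_evalS0]
      exact hfix.symm
    have hinit := congrArg (PowerSeries.coeff (R := AmpRing n) K)
      ((init1 Q j).trans (init2 hQ j).symm)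
    rw [PowerSeries.coeff_map, PowerSeries.coeff_map, coeff_mSer, coeff_mSer,
      ← ha1, ← ha2] at hinit
    rw [map_sub, hinit, sub_self, map_zero] at hemb
    exact sub_eq_zero.mp hemb
  · have hcne : Complex.I * (m : ℂ) ≠ 0 :=
      mul_ne_zero Complex.I_ne_zero (Int.cast_ne_zero.mpr hm)
    exact sub_eq_zero.mp (eq_zero_of_pderiv_add_C_mul hcne hD)

theorem core {V : Fin n → MvPolynomial (Fin n) (Polynomial (AddMonoidAlgebra ℂ ℤ))}
    {Q : Fin n → EpsSeries (AmpRing n)} (hQ : IsNilpotentSecularFamily V Q) :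
    ∀ (K : ℕ) (j : Fin n) (m : ℤ),
      (PowerSeries.coeff (R := (ModeRing (AmpRing2 n))) K (Q1 Q j)).coeff m
        = (PowerSeries.coeff (R := (ModeRing (AmpRing2 n))) K (Q2 Q j)).coeff m := by
  intro K
  induction K using Nat.strong_induction_on with
  | _ K IH =>
  have hV : ∀ j : Fin n,
      PowerSeries.coeff (R := (ModeRing (AmpRing2 n))) K
          (PowerSeries.X * VEval (AmpRing2 n) (V j) (Q1 Q))
        = PowerSeries.coeff (R := (ModeRing (AmpRing2 n))) K
          (PowerSeries.X * VEval (AmpRing2 n) (V j) (Q2 Q)) := by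
    intro j
    cases K with
    | zero => rw [PowerSeries.coeff_zero_X_mul, PowerSeries.coeff_zero_X_mul]
    | succ K' =>
      rw [PowerSeries.coeff_succ_X_mul, PowerSeries.coeff_succ_X_mul]
      refine TE_VEval (V j) (fun i l hl => ?_) K' le_rfl
      refine AddMonoidAlgebra.ext (Finsupp.ext fun m => ?_)
      exact IH l (Nat.lt_succ_of_le hl) i m
  suffices hsuff : ∀ (d : ℕ) (j : Fin n), n - 1 - (j : ℕ) ≤ d → ∀ m : ℤ,
      (PowerSeries.coeff (R := (ModeRing (AmpRing2 n))) K (Q1 Q j)).coeff m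
        = (PowerSeries.coeff (R := (ModeRing (AmpRing2 n))) K (Q2 Q j)).coeff m by
    exact fun j m => hsuff (n - 1 - (j : ℕ)) j le_rfl m
  intro d
  induction d with
  | zero =>
    intro j hj m
    have hnot : ¬ ((j : ℕ) + 1 < n) := by
      have := j.isLt
      omega
    exact step hQ K j m (hV j) (by rw [dif_neg hnot, dif_neg hnot])
  | succ d ihd =>
    intro j hj m
    refine step hQ K j m (hV j) ?_
    by_cases h : (j : ℕ) + 1 < n
    · rw [dif_pos h, dif_pos h]
      exact ihd ⟨(j : ℕ) + 1, h⟩ (by simp; omega) m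
    · rw [dif_neg h, dif_neg h]

theorem semigroup {V : Fin n → MvPolynomial (Fin n) (Polynomial (AddMonoidAlgebra ℂ ℤ))}
    {Q : Fin n → EpsSeries (AmpRing n)} (hQ : IsNilpotentSecularFamily V Q) (j : Fin n) :
    substSeries (substSA0 Q) (Pc Q j 0) = PowerSeries.map (shiftTS n) (Pc Q j 0) := by
  rw [Pc_eq, ← mSer_substSeries, ← Q2_apply, ← mSer_map, ← Q1_apply]
  refine PowerSeries.ext fun K => ?_
  rw [coeff_mSer, coeff_mSer]
  exact (core hQ K j 0).symm

/-- `t ↦ t`, `s ↦ -t`, `A ↦ A` -/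
def evalST (n : ℕ) : AmpRing2 n →+* AmpRing n :=
  (MvPolynomial.aeval (fun v : Option (Option (Fin n)) =>
    Option.elim v (MvPolynomial.X none)
      (fun w => Option.elim w (-MvPolynomial.X none) (fun i => MvPolynomial.X (some i))))).toRingHom

theorem evalST_C (c : ℂ) : evalST n (MvPolynomial.C c) = MvPolynomial.C c := by
  show MvPolynomial.aeval _ (MvPolynomial.C c) = _
  rw [MvPolynomial.aeval_C, MvPolynomial.algebraMap_eq]

theorem evalST_X (v : Option (Option (Fin n))) :
    evalST n (MvPolynomial.X v)
      = Option.elim v (MvPolynomial.X none)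
          (fun w => Option.elim w (-MvPolynomial.X none) (fun i => MvPolynomial.X (some i))) := by
  show MvPolynomial.aeval _ (MvPolynomial.X v) = _
  rw [MvPolynomial.aeval_X]

theorem evalST_embedTA : (evalST n).comp embedTA = RingHom.id (AmpRing n) := by
  refine MvPolynomial.ringHom_ext (fun c => ?_) (fun v => ?_)
  · rw [RingHom.comp_apply, embedTA_C, evalST_C, RingHom.id_apply]
  · rw [RingHom.comp_apply, RingHom.id_apply, embedTA_X, evalST_X]
    cases v <;> rfl

theorem evalST_shiftTS : (evalST n).comp (shiftTS n) = ev0R n := by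
  refine MvPolynomial.ringHom_ext (fun c => ?_) (fun v => ?_)
  · rw [RingHom.comp_apply, shiftTS_C, evalST_C]
    show _ = MvPolynomial.aeval _ (MvPolynomial.C c)
    rw [MvPolynomial.aeval_C, MvPolynomial.algebraMap_eq]
  · rw [RingHom.comp_apply, shiftTS_apply, MvPolynomial.aeval_X]
    show _ = MvPolynomial.aeval _ (MvPolynomial.X v)
    rw [MvPolynomial.aeval_X]
    cases v with
    | none =>
      show evalST n (MvPolynomial.X none + MvPolynomial.X (some none)) = _
      rw [map_add, evalST_X, evalST_X]
      show MvPolynomial.X none + -MvPolynomial.X none = (0 : AmpRing n)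
      ring
    | some i =>
      show evalST n (MvPolynomial.X (some (some i))) = _
      rw [evalST_X]
      rfl

theorem map_ev0R_Pc {V : Fin n → MvPolynomial (Fin n) (Polynomial (AddMonoidAlgebra ℂ ℤ))}
    {Q : Fin n → EpsSeries (AmpRing n)} (hQ : IsNilpotentSecularFamily V Q) (j : Fin n) :
    PowerSeries.map (ev0R n) (Pc Q j 0)
      = PowerSeries.C (R := AmpRing n) (MvPolynomial.X (some j)) := by
  refine PowerSeries.ext fun K => ?_
  rw [PowerSeries.coeff_map, coeff_Pc, PowerSeries.coeff_C]
  cases K with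
  | zero => rw [if_pos rfl]; exact ev0R_coeff_zero hQ j
  | succ k =>
    rw [if_neg (Nat.succ_ne_zero k)]
    exact ev0R_coeff_hi hQ j (k + 1) (Nat.succ_le_succ (Nat.zero_le k))

theorem sub_inv (Q : Fin n → EpsSeries (AmpRing n)) :
    (PowerSeries.map (evalST n)).comp (substSA0 Q) = substInv0 Q := by
  refine MvPolynomial.ringHom_ext (fun c => ?_) (fun v => ?_)
  · rw [RingHom.comp_apply, substSA0_C, PowerSeries.map_C, evalST_C, substInv0,
      MvPolynomial.eval₂Hom_C, RingHom.comp_apply]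
  · rw [RingHom.comp_apply, substSA0_X, substInv0, MvPolynomial.eval₂Hom_X']
    cases v with
    | none =>
      show PowerSeries.map (evalST n) (PowerSeries.C (MvPolynomial.X (some none))) = _
      rw [PowerSeries.map_C, evalST_X]
      rfl
    | some i =>
      show PowerSeries.map (evalST n) (PowerSeries.map embedTA (Pc Q i 0)) = _
      rw [psMap_map, evalST_embedTA, PowerSeries.map_id]
      rfl

end RGaux

/-- RG equation, non-slow dynamics and inversion; nilpotent case: the
renormalized amplitudes `𝒜_j(ε,t,A) = P_{j,0}(ε,t,A)` satisfy
(1) `∂_t 𝒜_j(ε,t,A) = [∂_s P_{j,0}(ε, s, 𝒜(ε,t,A))]|_{s=0}` in `ℂ[t,A][[ε]]`;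
(2) the right-hand side equals `𝒜_{j+1}(ε,t,A)` (with `𝒜_{n+1} := 0`) plus a series divisible
by `ε`;
(3) `P_{j,0}(ε, -t, 𝒜(ε,t,A)) = A_j` in `ℂ[t,A][[ε]]`. -/
theorem nilpotent_RG_and_inversion {n : ℕ} (hn : 0 < n)
    (V : Fin n → MvPolynomial (Fin n) (Polynomial (AddMonoidAlgebra ℂ ℤ)))
    (Q : Fin n → EpsSeries (AmpRing n))
    (hQ : IsNilpotentSecularFamily V Q) :
    ∀ j : Fin n,
      dT (Pc Q j 0)
          = PowerSeries.map evalS0 (dS (substSeries (substSA0 Q) (Pc Q j 0)))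
        ∧ (∃ E : PowerSeries (AmpRing n),
            PowerSeries.map evalS0 (dS (substSeries (substSA0 Q) (Pc Q j 0)))
              = PcNext Q j 0 + PowerSeries.X * E)
        ∧ substSeries (substInv0 Q) (Pc Q j 0)
            = PowerSeries.C (R := AmpRing n) (MvPolynomial.X (some j)) := by
  intro j
  have SG := RGaux.semigroup hQ j
  have hLHS : PowerSeries.map evalS0 (dS (substSeries (substSA0 Q) (Pc Q j 0)))
      = dT (Pc Q j 0) := by
    rw [SG]
    have h1 : dS (PowerSeries.map (RGaux.shiftTS n) (Pc Q j 0))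
        = PowerSeries.map (RGaux.shiftTS n) (dT (Pc Q j 0)) := by
      refine PowerSeries.ext fun K => ?_
      rw [RGaux.coeff_dS, PowerSeries.coeff_map, PowerSeries.coeff_map, RGaux.coeff_dT,
        RGaux.pderiv_shiftTS]
    rw [h1, RGaux.psMap_map, RGaux.evalS0_shiftTS, PowerSeries.map_id]
    rfl
  refine ⟨hLHS.symm, ⟨RGaux.mSer (VEval (AmpRing n) (V j) Q) 0, ?_⟩, ?_⟩
  · rw [hLHS]
    have hode := hQ.ode j 0
    have hz : MvPolynomial.C (Complex.I * ((0 : ℤ) : ℂ)) = (0 : AmpRing n) := by simp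
    rw [hz, map_zero, zero_mul, add_zero] at hode
    have hdT : (PowerSeries.mk fun k => MvPolynomial.pderiv none
          ((PowerSeries.coeff (R := (ModeRing (AmpRing n))) k (Q j)).coeff (0 : ℤ)))
        = dT (Pc Q j 0) := by
      refine PowerSeries.ext fun K => ?_
      rw [PowerSeries.coeff_mk, RGaux.coeff_dT, RGaux.coeff_Pc]
    have hXE : (PowerSeries.mk fun k => (PowerSeries.coeff (R := (ModeRing (AmpRing n))) k
          (PowerSeries.X * VEval (AmpRing n) (V j) Q)).coeff (0 : ℤ))
        = PowerSeries.X * RGaux.mSer (VEval (AmpRing n) (V j) Q) 0 := by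
      refine PowerSeries.ext fun K => ?_
      cases K with
      | zero =>
        rw [PowerSeries.coeff_mk, PowerSeries.coeff_zero_X_mul, PowerSeries.coeff_zero_X_mul]
        rfl
      | succ K' =>
        rw [PowerSeries.coeff_mk, PowerSeries.coeff_succ_X_mul, PowerSeries.coeff_succ_X_mul,
          RGaux.coeff_mSer]
    rw [hdT, hXE] at hode
    exact hode
  · have h3 := congrArg (PowerSeries.map (RGaux.evalST n)) SG
    rw [RGaux.map_substSeries, RGaux.sub_inv] at h3
    rw [RGaux.psMap_map, RGaux.evalST_shiftTS, RGaux.map_ev0R_Pc hQ] at h3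
    exact h3
end
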